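/- Let G(T) be the threshold graph on {1,…,n} with construction sequence T and Laplacian matrix L. Then the characteristic polynomial of L equals X·∏_{i=2}^{n} (X − (d(i) + [T(i) = 1])), where [T(i) = 1] denotes 1 if T(i) = 1 and 0 otherwise. In particular, the multiset of Laplacian eigenvalues of G(T) is {0} ∪ {d(i) + [T(i) = 1] : 2 ≤ i ≤ n}. -/

import Mathlib

open Finset Matrix Polynomial

/-- The threshold graph on `Fin n` (vertex `i` of the paper corresponds to `⟨i-1, _⟩ : Fin n`)
with construction sequence `T` : two distinct vertices are adjacent iff the later one
(in the construction order) was added by a join operation. -/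
def thresholdGraph (n : ℕ) (T : Fin n → Bool) : SimpleGraph (Fin n) where
  Adj i j := i ≠ j ∧ T (max i j) = true
  symm := by
    constructor
    intro i j h
    exact ⟨h.1.symm, by rw [max_comm]; exact h.2⟩
  loopless := by
    constructor
    intro i h
    exact h.1 rfl

instance thresholdGraph.instDecidableRelAdj (n : ℕ) (T : Fin n → Bool) :
    DecidableRel (thresholdGraph n T).Adj :=
  fun i j => decidable_of_iff (i ≠ j ∧ T (max i j) = true) Iff.rfl

/-- Change of basis matrix: columns are the all-ones vector (col 0) and `e_i - e_{i-1}`. -/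
private noncomputable def tP (n : ℕ) : Matrix (Fin n) (Fin n) ℝ := fun k i =>
  if (i : ℕ) = 0 then 1 else (if k = i then 1 else 0) - (if (k : ℕ) + 1 = (i : ℕ) then 1 else 0)

/-- Inverse of `tP`. -/
private noncomputable def tQ (n : ℕ) : Matrix (Fin n) (Fin n) ℝ := fun j k =>
  if (j : ℕ) = 0 then (n : ℝ)⁻¹
  else (if (j : ℕ) ≤ (k : ℕ) then 1 else 0) - ((n : ℝ) - (j : ℕ)) / n

private lemma tP_apply0 {n : ℕ} {k i : Fin n} (hi : (i : ℕ) = 0) : tP n k i = 1 := if_pos hi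

private lemma tP_apply1 {n : ℕ} {k i : Fin n} (hi : ¬ (i : ℕ) = 0) :
    tP n k i = (if k = i then 1 else 0) - (if (k : ℕ) + 1 = (i : ℕ) then 1 else 0) := if_neg hi

private lemma tQ_apply0 {n : ℕ} {j k : Fin n} (hj : (j : ℕ) = 0) : tQ n j k = (n : ℝ)⁻¹ :=
  if_pos hj

private lemma tQ_apply1 {n : ℕ} {j k : Fin n} (hj : ¬ (j : ℕ) = 0) :
    tQ n j k = (if (j : ℕ) ≤ (k : ℕ) then 1 else 0) - ((n : ℝ) - (j : ℕ)) / n := if_neg hj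

private lemma sum_indicator {n : ℕ} (j : Fin n) :
    ∑ k : Fin n, (if (j : ℕ) ≤ (k : ℕ) then (1 : ℝ) else 0) = (n : ℝ) - (j : ℕ) := by
  rw [Fin.sum_univ_eq_sum_range (fun k => if (j : ℕ) ≤ k then (1 : ℝ) else 0) n,
    Finset.sum_boole]
  have h1 : (Finset.range n).filter (fun k => (j : ℕ) ≤ k) = Finset.Ico (j : ℕ) n := by
    ext x
    simp only [Finset.mem_filter, Finset.mem_range, Finset.mem_Ico]
    omega
  rw [h1, Nat.card_Ico, Nat.cast_sub j.isLt.le]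

private lemma tQ_mul_tP {n : ℕ} (hn : 0 < n) : tQ n * tP n = 1 := by
  have hn0 : (n : ℝ) ≠ 0 := Nat.cast_ne_zero.mpr hn.ne'
  ext j i
  rw [Matrix.mul_apply]
  by_cases hi : (i : ℕ) = 0
  · simp only [tP_apply0 hi, mul_one]
    by_cases hj : (j : ℕ) = 0
    · have hji : j = i := Fin.ext (by omega)
      simp only [tQ_apply0 hj]
      rw [Finset.sum_const, Finset.card_univ, Fintype.card_fin, nsmul_eq_mul,
        mul_inv_cancel₀ hn0, hji, Matrix.one_apply_eq]
    · have hji : j ≠ i := fun h => hj (by rw [h]; exact hi)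
      simp only [tQ_apply1 hj]
      rw [Finset.sum_sub_distrib, sum_indicator, Finset.sum_const, Finset.card_univ,
        Fintype.card_fin, Matrix.one_apply_ne hji, nsmul_eq_mul]
      field_simp
      ring
  · have hi1 : (i : ℕ) - 1 < n := lt_of_le_of_lt (Nat.sub_le _ _) i.isLt
    set i' : Fin n := ⟨(i : ℕ) - 1, hi1⟩ with hi'
    have hii' : (i' : ℕ) = (i : ℕ) - 1 := rfl
    have hsum : ∑ k, tQ n j k * tP n k i = tQ n j i - tQ n j i' := by
      simp only [tP_apply1 hi, mul_sub]
      rw [Finset.sum_sub_distrib]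
      congr 1
      · rw [Finset.sum_eq_single i]
        · simp
        · intro k _ hk; simp [hk]
        · intro h; exact absurd (Finset.mem_univ i) h
      · rw [Finset.sum_eq_single i']
        · rw [if_pos (by omega), mul_one]
        · intro k _ hk
          have : ¬((k : ℕ) + 1 = (i : ℕ)) := by
            intro h
            exact hk (Fin.ext (by omega))
          simp [this]
        · intro h; exact absurd (Finset.mem_univ i') h
    rw [hsum]
    by_cases hj : (j : ℕ) = 0
    · have hji : j ≠ i := fun h => hi (by rw [← h]; exact hj)
      simp only [tQ_apply0 hj]
      rw [Matrix.one_apply_ne hji, sub_self]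
    · simp only [tQ_apply1 hj]
      by_cases hji : j = i
      · have h1 : (j : ℕ) ≤ (i : ℕ) := le_of_eq (by rw [hji])
        have h2 : ¬((j : ℕ) ≤ (i' : ℕ)) := by omega
        rw [if_pos h1, if_neg h2, hji, Matrix.one_apply_eq]
        ring
      · have hvne : (j : ℕ) ≠ (i : ℕ) := fun h => hji (Fin.ext h)
        have heq : (if (j : ℕ) ≤ (i : ℕ) then (1 : ℝ) else 0)
            = (if (j : ℕ) ≤ (i' : ℕ) then (1 : ℝ) else 0) := by
          by_cases h : (j : ℕ) ≤ (i : ℕ)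
          · rw [if_pos h, if_pos (by omega)]
          · rw [if_neg h, if_neg (by omega)]
        rw [Matrix.one_apply_ne hji, heq]
        ring

section lap

variable {n : ℕ} (T : Fin n → Bool)

private lemma lap_diag (i : Fin n) :
    (thresholdGraph n T).lapMatrix ℝ i i = ((thresholdGraph n T).degree i : ℝ) := by
  simp [SimpleGraph.lapMatrix, SimpleGraph.degMatrix]

private lemma lap_off {i j : Fin n} (h : i ≠ j) :
    (thresholdGraph n T).lapMatrix ℝ i j
      = -(if T (max i j) = true then (1 : ℝ) else 0) := by
  simp only [SimpleGraph.lapMatrix, Matrix.sub_apply, SimpleGraph.degMatrix,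
    Matrix.diagonal_apply_ne _ h, SimpleGraph.adjMatrix_apply]
  have hadj : (thresholdGraph n T).Adj i j ↔ T (max i j) = true :=
    ⟨fun h' => h'.2, fun h' => ⟨h, h'⟩⟩
  rw [if_congr hadj rfl rfl]
  ring

private lemma lap_rowsum (k : Fin n) :
    ∑ l, (thresholdGraph n T).lapMatrix ℝ k l = 0 := by
  have h := congrFun (SimpleGraph.lapMatrix_mulVec_const_eq_zero (R := ℝ)
    (G := thresholdGraph n T)) k
  simpa [Matrix.mulVec, dotProduct] using h

private lemma lap_colsum (l : Fin n) :
    ∑ k, (thresholdGraph n T).lapMatrix ℝ k l = 0 := by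
  have hs : ∀ k, (thresholdGraph n T).lapMatrix ℝ k l
      = (thresholdGraph n T).lapMatrix ℝ l k := fun k =>
    (SimpleGraph.isSymm_lapMatrix ℝ (thresholdGraph n T)).apply l k
  rw [Finset.sum_congr rfl (fun k _ => hs k)]
  exact lap_rowsum T l

end lap


section main

variable {n : ℕ} (T : Fin n → Bool)

private def pd (i : Fin n) : Fin n := ⟨(i : ℕ) - 1, lt_of_le_of_lt (Nat.sub_le _ _) i.isLt⟩

private lemma LP_apply (k i : Fin n) :
    ((thresholdGraph n T).lapMatrix ℝ * tP n) k i =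
      if (i : ℕ) = 0 then 0 else
        (thresholdGraph n T).lapMatrix ℝ k i
          - (thresholdGraph n T).lapMatrix ℝ k (pd i) := by
  rw [Matrix.mul_apply]
  by_cases hi : (i : ℕ) = 0
  · rw [if_pos hi]
    simp only [tP_apply0 hi, mul_one]
    exact lap_rowsum T k
  · rw [if_neg hi]
    simp only [tP_apply1 hi, mul_sub]
    rw [Finset.sum_sub_distrib]
    congr 1
    · rw [Finset.sum_eq_single i]
      · simp
      · intro l _ hl; simp [hl]
      · intro h; exact absurd (Finset.mem_univ i) h
    · rw [Finset.sum_eq_single (pd i)]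
      · rw [if_pos, mul_one]
        show (pd i : ℕ) + 1 = (i : ℕ)
        simp only [pd]
        omega
      · intro l _ hl
        have h : ¬((l : ℕ) + 1 = (i : ℕ)) := by
          intro h
          exact hl (Fin.ext (by simp only [pd]; omega))
        simp [h]
      · intro h; exact absurd (Finset.mem_univ (pd i)) h

private lemma sumLP (i : Fin n) :
    ∑ k, ((thresholdGraph n T).lapMatrix ℝ * tP n) k i = 0 := by
  by_cases hi : (i : ℕ) = 0
  · rw [Finset.sum_congr rfl (fun k _ => by rw [LP_apply, if_pos hi]), Finset.sum_const,
      smul_zero]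
  · rw [Finset.sum_congr rfl (fun k _ => by rw [LP_apply, if_neg hi]),
      Finset.sum_sub_distrib, lap_colsum, lap_colsum, sub_zero]

private lemma LP_high {k i : Fin n} (hki : (i : ℕ) < (k : ℕ)) :
    ((thresholdGraph n T).lapMatrix ℝ * tP n) k i = 0 := by
  rw [LP_apply]
  by_cases hi : (i : ℕ) = 0
  · rw [if_pos hi]
  · rw [if_neg hi]
    have h1 : k ≠ i := fun h => absurd (congrArg Fin.val h) (by omega)
    have h2 : k ≠ pd i := fun h => by
      have h' := congrArg Fin.val h
      simp only [pd] at h'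
      omega
    rw [lap_off T h1, lap_off T h2]
    have hm1 : max k i = k := max_eq_left (by rw [Fin.le_def]; omega)
    have hm2 : max k (pd i) = k := max_eq_left (by rw [Fin.le_def]; simp only [pd]; omega)
    rw [hm1, hm2, sub_self]

private lemma M_row0 {j : Fin n} (hj : (j : ℕ) = 0) (i : Fin n) :
    (tQ n * ((thresholdGraph n T).lapMatrix ℝ * tP n)) j i = 0 := by
  rw [Matrix.mul_apply,
    Finset.sum_congr rfl (fun k _ => by rw [tQ_apply0 hj]),
    ← Finset.mul_sum, sumLP, mul_zero]

private lemma M_row {j : Fin n} (hj : ¬(j : ℕ) = 0) (i : Fin n) :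
    (tQ n * ((thresholdGraph n T).lapMatrix ℝ * tP n)) j i =
      ∑ k : Fin n, (if (j : ℕ) ≤ (k : ℕ) then
        ((thresholdGraph n T).lapMatrix ℝ * tP n) k i else 0) := by
  rw [Matrix.mul_apply,
    Finset.sum_congr rfl
      (fun k _ => by rw [tQ_apply1 hj, sub_mul, ite_mul, one_mul, zero_mul]),
    Finset.sum_sub_distrib, ← Finset.mul_sum, sumLP, mul_zero, sub_zero]

private lemma M_tri {j i : Fin n} (hij : (i : ℕ) < (j : ℕ)) :
    (tQ n * ((thresholdGraph n T).lapMatrix ℝ * tP n)) j i = 0 := by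
  have hj : ¬(j : ℕ) = 0 := by omega
  rw [M_row T hj]
  apply Finset.sum_eq_zero
  intro k _
  by_cases h : (j : ℕ) ≤ (k : ℕ)
  · rw [if_pos h, LP_high T (lt_of_lt_of_le hij h)]
  · rw [if_neg h]

private lemma M_diag {i : Fin n} (hi : ¬(i : ℕ) = 0) :
    (tQ n * ((thresholdGraph n T).lapMatrix ℝ * tP n)) i i =
      ((thresholdGraph n T).degree i : ℝ) + (if T i = true then 1 else 0) := by
  rw [M_row T hi, Finset.sum_eq_single i]
  · have hne : i ≠ pd i := fun h => by
      have h' := congrArg Fin.val h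
      simp only [pd] at h'
      omega
    rw [if_pos le_rfl, LP_apply, if_neg hi, lap_diag, lap_off T hne]
    have hmax : max i (pd i) = i :=
      max_eq_left (by rw [Fin.le_def]; simp only [pd]; omega)
    rw [hmax]
    ring
  · intro k _ hk
    by_cases h : (i : ℕ) ≤ (k : ℕ)
    · have hlt : (i : ℕ) < (k : ℕ) :=
        lt_of_le_of_ne h (fun he => hk (Fin.ext he.symm))
    -- k ≠ i
      rw [if_pos h, LP_high T hlt]
    · rw [if_neg h]
  · intro h; exact absurd (Finset.mem_univ i) h

end main

theorem charpoly_thresholdGraph (n : ℕ) (T : Fin n → Bool) (hn : 0 < n)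
    (hT1 : T ⟨0, hn⟩ = false) :
    ((thresholdGraph n T).lapMatrix ℝ).charpoly =
      X * ∏ i ∈ Finset.univ.erase (⟨0, hn⟩ : Fin n),
        (X - C (((thresholdGraph n T).degree i : ℝ) + (if T i = true then 1 else 0))) := by
  classical
  set L := (thresholdGraph n T).lapMatrix ℝ with hL
  have hQP : tQ n * tP n = 1 := tQ_mul_tP hn
  set M : Matrix (Fin n) (Fin n) ℝ := tQ n * (L * tP n) with hMdef
  have hmapQP : (tQ n).map (C : ℝ →+* ℝ[X]) * (tP n).map C = 1 := by
    rw [← Matrix.map_mul, hQP, Matrix.map_one _ (map_zero C) (map_one C)]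
  have hcm : charmatrix M = (tQ n).map C * charmatrix L * (tP n).map C := by
    rw [charmatrix, charmatrix, Matrix.mul_sub, Matrix.sub_mul]
    congr 1
    · -- scalar part
      have hcomm : Matrix.scalar (Fin n) (X : ℝ[X]) * (tP n).map C
          = (tP n).map C * Matrix.scalar (Fin n) (X : ℝ[X]) :=
        ((Matrix.scalar_commute (X : ℝ[X]) (fun r => Commute.all _ r) ((tP n).map C)).eq)
      calc Matrix.scalar (Fin n) (X : ℝ[X])
          = (tQ n).map C * (tP n).map C * Matrix.scalar (Fin n) (X : ℝ[X]) := by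
            rw [hmapQP, one_mul]
        _ = (tQ n).map C * Matrix.scalar (Fin n) (X : ℝ[X]) * (tP n).map C := by
            rw [Matrix.mul_assoc, Matrix.mul_assoc, hcomm]
    · -- map part
      simp only [RingHom.mapMatrix_apply]
      rw [hMdef, Matrix.map_mul, Matrix.map_mul, Matrix.mul_assoc]
  have hdet1 : ((tQ n).map (C : ℝ →+* ℝ[X])).det * ((tP n).map C).det = 1 := by
    rw [← Matrix.det_mul, hmapQP, Matrix.det_one]
  have hcp : M.charpoly = L.charpoly := by
    rw [Matrix.charpoly, Matrix.charpoly, hcm, Matrix.det_mul, Matrix.det_mul,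
      mul_right_comm, hdet1, one_mul]
  have htri : M.BlockTriangular id := by
    intro p q h
    exact M_tri T h
  rw [← hcp, Matrix.charpoly_of_upperTriangular M htri,
    ← Finset.mul_prod_erase Finset.univ (fun i => X - C (M i i))
      (Finset.mem_univ (⟨0, hn⟩ : Fin n))]
  congr 1
  · show X - C (M ⟨0, hn⟩ ⟨0, hn⟩) = X
    rw [hMdef, M_row0 T rfl, map_zero, sub_zero]
  · refine Finset.prod_congr rfl (fun i hi => ?_)
    have hi0 : ¬(i : ℕ) = 0 := fun h =>
      (Finset.mem_erase.mp hi).1 (Fin.ext h)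
    rw [hMdef, M_diag T hi0]
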